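/- For every even integer L ≥ 2 and every ε with 0 < ε < 1/4, the μ-measure of the set of configurations φ for which every bond is ε-disordered is at least (1 − 4ε)^{L²/2}. -/
import Mathlib

open MeasureTheory Real
open scoped ENNReal

/-- The site space: the discrete torus of side `L`. -/
abbrev Torus (L : ℕ) := ZMod L × ZMod L

/-- A configuration of the toy model: one circle-valued spin per site. -/
abbrev Config (L : ℕ) := Torus L → AddCircle (1 : ℝ)

/-- The two unit coordinate vectors `e₁ = (1,0)` and `e₂ = (0,1)`. -/
def coordVec (L : ℕ) : Fin 2 → Torus L
  | 0 => (1, 0)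
  | 1 => (0, 1)

/-- The product of normalized Haar measures on the spins. -/
noncomputable def toyMeasure (L : ℕ) [NeZero L] : Measure (Config L) :=
  Measure.pi fun _ => (AddCircle.haarAddCircle : Measure (AddCircle (1 : ℝ)))

/-- A bond `(x, x + eᵢ)` of the configuration `φ` is `ε`-ordered when
`‖φ x - φ (x + eᵢ)‖ ≤ ε/2`, where `‖·‖` is the quotient norm on `ℝ/ℤ`. -/
def IsOrderedBond (L : ℕ) [NeZero L] (ε : ℝ) (φ : Config L) (x : Torus L) (i : Fin 2) : Prop :=
  ‖φ x - φ (x + coordVec L i)‖ ≤ ε / 2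

noncomputable instance (L : ℕ) [NeZero L] (ε : ℝ) (φ : Config L) (x : Torus L) (i : Fin 2) :
    Decidable (IsOrderedBond L ε φ x i) :=
  Real.decidableLE _ _

/-- The toy Hamiltonian: minus the number of `ε`-ordered bonds. -/
noncomputable def toyH (L : ℕ) [NeZero L] (ε : ℝ) (φ : Config L) : ℝ :=
  -(∑ x : Torus L, ∑ i : Fin 2, if IsOrderedBond L ε φ x i then (1 : ℝ) else 0)

/-- The toy-model partition function. -/
noncomputable def toyZ (L : ℕ) [NeZero L] (β ε : ℝ) : ℝ :=
  ∫ φ, Real.exp (-β * toyH L ε φ) ∂(toyMeasure L)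

/- ### Auxiliary material for the proof -/

/-- The parity of a site of the torus (for `L` even). -/
def par (L : ℕ) (hd : (2:ℕ) ∣ L) (x : Torus L) : ZMod 2 :=
  ZMod.castHom hd (ZMod 2) x.1 + ZMod.castHom hd (ZMod 2) x.2

lemma par_add (L : ℕ) (hd : (2:ℕ) ∣ L) (x : Torus L) (i : Fin 2) :
    par L hd (x + coordVec L i) = par L hd x + 1 := by
  fin_cases i <;>
    simp [par, coordVec, Prod.fst_add, Prod.snd_add, map_add, map_one] <;> ring

lemma par_sub (L : ℕ) (hd : (2:ℕ) ∣ L) (x : Torus L) (i : Fin 2) :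
    par L hd (x - coordVec L i) = par L hd x + 1 := by
  have h := par_add L hd (x - coordVec L i) i
  rw [sub_add_cancel] at h
  rw [h, add_assoc, (by decide : (1:ZMod 2) + 1 = 0), add_zero]

lemma zmod2_ne (v : ZMod 2) : ¬ v = 1 ↔ v = 0 := by revert v; decide

lemma card_even_sites (L : ℕ) [NeZero L] (hd : (2:ℕ) ∣ L) :
    Fintype.card {x : Torus L // ¬ par L hd x = 1} = L ^ 2 / 2 := by
  classical
  have e01 : {x : Torus L // par L hd x = 0} ≃ {x : Torus L // par L hd x = 1} :=
    { toFun := fun y => ⟨y.1 + coordVec L 0, by rw [par_add, y.2, zero_add]⟩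
      invFun := fun y => ⟨y.1 - coordVec L 0, by rw [par_sub, y.2]; decide⟩
      left_inv := fun y => by simp
      right_inv := fun y => by simp }
  have hc : Fintype.card {x : Torus L // ¬ par L hd x = 1}
      = Fintype.card {x : Torus L // par L hd x = 1} := by
    rw [Fintype.card_congr ((Equiv.subtypeEquivRight (fun x => zmod2_ne _)).trans e01)]
  have hsum : Fintype.card {x : Torus L // ¬ par L hd x = 1}
      = Fintype.card (Torus L) - Fintype.card {x : Torus L // par L hd x = 1} :=
    Fintype.card_subtype_compl _
  have hle : Fintype.card {x : Torus L // par L hd x = 1} ≤ Fintype.card (Torus L) :=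
    Fintype.card_subtype_le _
  have hT : Fintype.card (Torus L) = L ^ 2 := by
    simp [Fintype.card_prod, ZMod.card, sq]
  omega

lemma haar_closedBall (v : AddCircle (1:ℝ)) (r : ℝ) :
    (AddCircle.haarAddCircle : Measure (AddCircle (1:ℝ))) (Metric.closedBall v r)
      = ENNReal.ofReal (min 1 (2 * r)) := by
  have h := AddCircle.volume_eq_smul_haarAddCircle (T := 1)
  rw [← AddCircle.volume_closedBall (x := v), h]
  simp

set_option maxHeartbeats 1000000 in
/-- the set of fully `ε`-disordered configurations has measure
at least `(1 - 4ε)^{L²/2}` when `L` is even. -/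
theorem toy_disordered_measure_lower_bound (L : ℕ) (hL : 2 ≤ L) (hLeven : Even L)
    (ε : ℝ) (hε : 0 < ε) (hε' : ε < 1 / 4) :
    haveI : NeZero L := ⟨by omega⟩
    ENNReal.ofReal ((1 - 4 * ε) ^ (L ^ 2 / 2)) ≤
      toyMeasure L {φ : Config L | ∀ x : Torus L, ∀ i : Fin 2, ¬ IsOrderedBond L ε φ x i} := by
  haveI : NeZero L := ⟨by omega⟩
  classical
  have hd : (2:ℕ) ∣ L := hLeven.two_dvd
  set p : Torus L → Prop := fun x => par L hd x = 1 with hp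
  set S : Set (Config L) :=
    {φ : Config L | ∀ x : Torus L, ∀ i : Fin 2, ¬ IsOrderedBond L ε φ x i} with hSdef
  have hSm : MeasurableSet S := by
    have : S = ⋂ x : Torus L, ⋂ i : Fin 2,
        {φ : Config L | ε/2 < ‖φ x - φ (x + coordVec L i)‖} := by
      ext φ; simp [hSdef, IsOrderedBond, not_le]
    rw [this]
    exact MeasurableSet.iInter fun x => MeasurableSet.iInter fun i =>
      measurableSet_lt measurable_const
        (((measurable_pi_apply x).sub (measurable_pi_apply (x + coordVec L i))).norm)
  set μ0 : Measure (AddCircle (1:ℝ)) := AddCircle.haarAddCircle with hμ0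
  set μ₁ : Measure (∀ _ : {x : Torus L // p x}, AddCircle (1:ℝ)) :=
    Measure.pi (fun _ => μ0) with hμ₁
  set μ₂ : Measure (∀ _ : {x : Torus L // ¬ p x}, AddCircle (1:ℝ)) :=
    Measure.pi (fun _ => μ0) with hμ₂
  set e := MeasurableEquiv.piEquivPiSubtypeProd (fun _ : Torus L => AddCircle (1:ℝ)) p with he
  have hmp : MeasurePreserving e (toyMeasure L) (μ₁.prod μ₂) :=
    measurePreserving_piEquivPiSubtypeProd (fun _ : Torus L => μ0) p
  have hTset : toyMeasure L S = (μ₁.prod μ₂) (⇑e.symm ⁻¹' S) := by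
    rw [← hmp.map_eq, MeasurableEquiv.map_apply]
    congr 1
    ext φ
    simp
  have hTm : MeasurableSet (⇑e.symm ⁻¹' S) := e.symm.measurable hSm
  set m : ℕ := Fintype.card {x : Torus L // ¬ p x} with hm
  set c : ℝ≥0∞ := ENNReal.ofReal (1 - 4 * ε) with hc
  have hε1 : (0:ℝ) ≤ 1 - 4 * ε := by linarith
  -- pointwise (conditional) estimate
  have key : ∀ ψ : (∀ _ : {x : Torus L // p x}, AddCircle (1:ℝ)),
      c ^ m ≤ μ₂ (Prod.mk ψ ⁻¹' (⇑e.symm ⁻¹' S)) := by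
    intro ψ
    have hmem_add : ∀ (y : Torus L), ¬ p y → ∀ i : Fin 2, p (y + coordVec L i) := by
      intro y hy i
      show par L hd (y + coordVec L i) = 1
      rw [par_add, (zmod2_ne _).1 hy, zero_add]
    have hmem_sub : ∀ (y : Torus L), ¬ p y → ∀ i : Fin 2, p (y - coordVec L i) := by
      intro y hy i
      show par L hd (y - coordVec L i) = 1
      rw [par_sub, (zmod2_ne _).1 hy, zero_add]
    set A : ∀ _ : {x : Torus L // ¬ p x}, Set (AddCircle (1:ℝ)) := fun y =>
      (⋃ z : Fin 2 × Bool, Metric.closedBall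
        (if z.2 then ψ ⟨y.1 + coordVec L z.1, hmem_add y.1 y.2 z.1⟩
         else ψ ⟨y.1 - coordVec L z.1, hmem_sub y.1 y.2 z.1⟩) (ε/2))ᶜ with hA
    have hφ : ∀ (θ : ∀ _ : {x : Torus L // ¬ p x}, AddCircle (1:ℝ)) (x : Torus L),
        e.symm (ψ, θ) x = if h : p x then ψ ⟨x, h⟩ else θ ⟨x, h⟩ := fun θ x => rfl
    have hsub : Set.univ.pi A ⊆ Prod.mk ψ ⁻¹' (⇑e.symm ⁻¹' S) := by
      intro θ hθ
      simp only [Set.mem_preimage, hSdef, Set.mem_setOf_eq]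
      intro x i
      rw [IsOrderedBond, not_le]
      by_cases hx : p x
      · have hx' : ¬ p (x + coordVec L i) := by
          show ¬ par L hd (x + coordVec L i) = 1
          rw [par_add, hx]; decide
        have h1 : e.symm (ψ, θ) x = ψ ⟨x, hx⟩ := by rw [hφ, dif_pos hx]
        have h2 : e.symm (ψ, θ) (x + coordVec L i) = θ ⟨x + coordVec L i, hx'⟩ := by
          rw [hφ, dif_neg hx']
        have hmem := hθ ⟨x + coordVec L i, hx'⟩ (Set.mem_univ _)
        rw [hA, Set.mem_compl_iff, Set.mem_iUnion] at hmem
        push_neg at hmem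
        have h3 := hmem (i, false)
        simp only [Bool.false_eq_true, if_false] at h3
        have hsubeq : (⟨(x + coordVec L i) - coordVec L i,
            hmem_sub _ hx' i⟩ : {x : Torus L // p x}) = ⟨x, hx⟩ :=
          Subtype.ext (add_sub_cancel_right x (coordVec L i))
        rw [hsubeq] at h3
        rw [Metric.mem_closedBall, not_le, dist_eq_norm] at h3
        rw [h1, h2, norm_sub_rev]
        exact h3
      · have hx' : p (x + coordVec L i) := hmem_add x hx i
        have h1 : e.symm (ψ, θ) x = θ ⟨x, hx⟩ := by rw [hφ, dif_neg hx]
        have h2 : e.symm (ψ, θ) (x + coordVec L i) = ψ ⟨x + coordVec L i, hx'⟩ := by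
          rw [hφ, dif_pos hx']
        have hmem := hθ ⟨x, hx⟩ (Set.mem_univ _)
        rw [hA, Set.mem_compl_iff, Set.mem_iUnion] at hmem
        push_neg at hmem
        have h3 := hmem (i, true)
        simp only [if_true] at h3
        rw [Metric.mem_closedBall, not_le, dist_eq_norm] at h3
        rw [h1, h2]
        exact h3
    have hAc : ∀ y, c ≤ μ0 (A y) := by
      intro y
      have hball : ∀ v : AddCircle (1:ℝ),
          μ0 (Metric.closedBall v (ε/2)) = ENNReal.ofReal ε := by
        intro v
        rw [hμ0, haar_closedBall]
        congr 1
        rw [min_eq_right (by linarith)]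
        ring
      have hUm : MeasurableSet (⋃ z : Fin 2 × Bool, Metric.closedBall
          (if z.2 then ψ ⟨y.1 + coordVec L z.1, hmem_add y.1 y.2 z.1⟩
           else ψ ⟨y.1 - coordVec L z.1, hmem_sub y.1 y.2 z.1⟩) (ε/2)) :=
        MeasurableSet.iUnion fun z => measurableSet_closedBall
      have hU : μ0 (⋃ z : Fin 2 × Bool, Metric.closedBall
          (if z.2 then ψ ⟨y.1 + coordVec L z.1, hmem_add y.1 y.2 z.1⟩
           else ψ ⟨y.1 - coordVec L z.1, hmem_sub y.1 y.2 z.1⟩) (ε/2))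
          ≤ ENNReal.ofReal (4 * ε) := by
        refine le_trans (measure_iUnion_le _) ?_
        have : ∀ z : Fin 2 × Bool, μ0 (Metric.closedBall
            (if z.2 then ψ ⟨y.1 + coordVec L z.1, hmem_add y.1 y.2 z.1⟩
             else ψ ⟨y.1 - coordVec L z.1, hmem_sub y.1 y.2 z.1⟩) (ε/2))
            = ENNReal.ofReal ε := fun z => hball _
        rw [tsum_congr this, tsum_fintype, Finset.sum_const]
        have hcard : (Finset.univ : Finset (Fin 2 × Bool)).card = 4 := by decide
        rw [hcard, ENNReal.ofReal_mul (by norm_num : (0:ℝ) ≤ 4)]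
        rw [nsmul_eq_mul]
        norm_num
      rw [hA]
      have hcompl : μ0 ((⋃ z : Fin 2 × Bool, Metric.closedBall
          (if z.2 then ψ ⟨y.1 + coordVec L z.1, hmem_add y.1 y.2 z.1⟩
           else ψ ⟨y.1 - coordVec L z.1, hmem_sub y.1 y.2 z.1⟩) (ε/2))ᶜ)
          = 1 - μ0 (⋃ z : Fin 2 × Bool, Metric.closedBall
          (if z.2 then ψ ⟨y.1 + coordVec L z.1, hmem_add y.1 y.2 z.1⟩
           else ψ ⟨y.1 - coordVec L z.1, hmem_sub y.1 y.2 z.1⟩) (ε/2)) := by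
        rw [measure_compl hUm (measure_ne_top _ _), measure_univ]
      rw [hcompl, hc, ENNReal.ofReal_sub _ (by positivity), ENNReal.ofReal_one]
      exact tsub_le_tsub_left hU 1
    calc c ^ m = ∏ _y : {x : Torus L // ¬ p x}, c := by
          rw [Finset.prod_const, Finset.card_univ, hm]
      _ ≤ ∏ y : {x : Torus L // ¬ p x}, μ0 (A y) :=
          Finset.prod_le_prod' fun y _ => hAc y
      _ = μ₂ (Set.univ.pi A) := (Measure.pi_pi _ _).symm
      _ ≤ μ₂ (Prod.mk ψ ⁻¹' (⇑e.symm ⁻¹' S)) := measure_mono hsub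
  have hmain : c ^ m ≤ toyMeasure L S := by
    rw [hTset, Measure.prod_apply hTm]
    calc c ^ m = ∫⁻ _, c ^ m ∂μ₁ := by rw [lintegral_const, measure_univ, mul_one]
      _ ≤ ∫⁻ ψ, μ₂ (Prod.mk ψ ⁻¹' (⇑e.symm ⁻¹' S)) ∂μ₁ := lintegral_mono key
  have hmval : m = L ^ 2 / 2 := card_even_sites L hd
  calc ENNReal.ofReal ((1 - 4 * ε) ^ (L ^ 2 / 2)) = c ^ m := by
        rw [hc, ← ENNReal.ofReal_pow hε1, hmval]
    _ ≤ toyMeasure L S := hmain
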